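/- For every integer j ≥ 1 and every u ∈ 1 + A^j there exist unique elements d₁, …, d_{p−1} ∈ A with d_i ∈ A^{i+j−1} for each i, such that for every integer n ≥ 0 one has u·B(u)·B²(u)⋯B^{n−1}(u) = 1 + Σ_{1≤i≤p−1} d_i·n̄^i, where the empty product (case n = 0) is 1 and n̄ denotes the image of n in 𝔽_p. (This is the associative-algebra form, proved via enveloping algebras, of Propositions 3.2 and 3.4.) -/

import Mathlib

private def Dd {M : Type*} [AddCommGroup M] (f : ℕ → M) : ℕ → M := fun n => f (n+1) - f n

private lemma Dd_iter_succ' {M : Type*} [AddCommGroup M] (f : ℕ → M) (k : ℕ) :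
    Dd^[k+1] f = Dd (Dd^[k] f) := Function.iterate_succ_apply' Dd k f

private lemma Dd_iter_succ {M : Type*} [AddCommGroup M] (f : ℕ → M) (k : ℕ) :
    Dd^[k+1] f = Dd^[k] (Dd f) := Function.iterate_succ_apply Dd k f

private lemma Dd_add {M : Type*} [AddCommGroup M] (f g : ℕ → M) :
    Dd (fun n => f n + g n) = fun n => Dd f n + Dd g n := by
  funext n; simp only [Dd]; abel

private lemma Dd_iter_add {M : Type*} [AddCommGroup M] (k : ℕ) (f g : ℕ → M) :
    Dd^[k] (fun n => f n + g n) = fun n => Dd^[k] f n + Dd^[k] g n := by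
  induction k generalizing f g with
  | zero => simp
  | succ k ih => rw [Dd_iter_succ, Dd_iter_succ f, Dd_iter_succ g, Dd_add, ih]

private lemma Dd_shift {M : Type*} [AddCommGroup M] (f : ℕ → M) :
    Dd (fun n => f (n+1)) = fun n => Dd f (n+1) := rfl

private lemma Dd_iter_shift {M : Type*} [AddCommGroup M] (k : ℕ) (f : ℕ → M) :
    Dd^[k] (fun n => f (n+1)) = fun n => Dd^[k] f (n+1) := by
  induction k generalizing f with
  | zero => simp
  | succ k ih => rw [Dd_iter_succ, Dd_iter_succ f, Dd_shift, ih]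

private lemma newton {M : Type*} [AddCommGroup M] :
    ∀ (n : ℕ) (f : ℕ → M), f n = ∑ i ∈ Finset.range (n+1), (n.choose i) • Dd^[i] f 0 := by
  intro n
  induction n with
  | zero => intro f; simp
  | succ n ih =>
    intro f
    rw [show f (n+1) = ∑ i ∈ Finset.range (n+1), n.choose i • Dd^[i] (fun m => f (m+1)) 0
      from ih (fun m => f (m+1))]
    have h2 : ∀ i, Dd^[i] (fun m => f (m+1)) 0 = Dd^[i] f 0 + Dd^[i+1] f 0 := by
      intro i
      rw [Dd_iter_shift, Dd_iter_succ']
      simp only [Dd]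
      abel
    simp only [h2, smul_add]
    rw [Finset.sum_add_distrib]
    have hr : ∑ i ∈ Finset.range (n+1+1), (n+1).choose i • Dd^[i] f 0
        = ∑ i ∈ Finset.range (n+1), ((n+1).choose (i+1)) • Dd^[i+1] f 0 + Dd^[0] f 0 := by
      rw [Finset.sum_range_succ']; simp
    rw [hr]
    have h3 : ∀ i, (n+1).choose (i+1) = n.choose i + n.choose (i+1) := fun i =>
      Nat.choose_succ_succ n i
    simp only [h3, add_smul]
    rw [Finset.sum_add_distrib]
    have h4 : ∑ i ∈ Finset.range (n+1), n.choose (i+1) • Dd^[i+1] f 0 + Dd^[0] f 0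
        = ∑ i ∈ Finset.range (n+1), n.choose i • Dd^[i] f 0 := by
      have h5 : Dd^[0] f 0 = n.choose 0 • Dd^[0] f 0 := by simp
      rw [h5, ← Finset.sum_range_succ' (fun i => n.choose i • Dd^[i] f 0) (n+1),
        Finset.sum_range_succ]
      simp [Nat.choose_succ_self]
    -- goal: Σ C(n,i)•e_i + Σ C(n,i)•e_{i+1} = (Σ C(n,i)•e_{i+1} + Σ C(n,i+1)•e_{i+1}) + e_0
    rw [add_assoc, h4]
    abel
section
variable {A : Type*} [Ring A] (F : ℕ → AddSubgroup A)

private def GoodF (f : ℕ → A) (α : ℕ) : Prop := ∀ k n, Dd^[k] f n ∈ F (α + k)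

variable {F}

private lemma goodF_mono (hFanti : ∀ i j : ℕ, i ≤ j → F j ≤ F i) {f : ℕ → A} {α β : ℕ}
    (h : GoodF F f α) (hβ : β ≤ α) : GoodF F f β :=
  fun k n => hFanti _ _ (by omega) (h k n)

private lemma goodF_D {f : ℕ → A} {α : ℕ} (h : GoodF F f α) : GoodF F (Dd f) (α + 1) := by
  intro k n
  rw [← Dd_iter_succ]
  have : α + 1 + k = α + (k + 1) := by omega
  rw [this]
  exact h (k+1) n

private lemma goodF_shift {f : ℕ → A} {α : ℕ} (h : GoodF F f α) :
    GoodF F (fun n => f (n+1)) α := by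
  intro k n
  rw [Dd_iter_shift]
  exact h k (n+1)

private lemma goodF_add {f g : ℕ → A} {α : ℕ} (hf : GoodF F f α) (hg : GoodF F g α) :
    GoodF F (fun n => f n + g n) α := by
  intro k n
  rw [Dd_iter_add]
  exact add_mem (hf k n) (hg k n)

private lemma goodF_mul (hFmul : ∀ i j : ℕ, ∀ a ∈ F i, ∀ b ∈ F j, a * b ∈ F (i + j)) :
    ∀ (k : ℕ) (f g : ℕ → A) (α β : ℕ), GoodF F f α → GoodF F g β →
      ∀ n, Dd^[k] (fun n => f n * g n) n ∈ F (α + β + k) := by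
  intro k
  induction k with
  | zero =>
    intro f g α β hf hg n
    have hfn := hf 0 n
    have hgn := hg 0 n
    simp only [Function.iterate_zero, id] at hfn hgn ⊢
    simpa using hFmul α β (f n) hfn (g n) hgn
  | succ k ih =>
    intro f g α β hf hg n
    rw [Dd_iter_succ]
    have hD : Dd (fun n => f n * g n)
        = fun n => f (n+1) * Dd g n + Dd f n * g n := by
      funext m; simp only [Dd]; rw [mul_sub, sub_mul]; abel
    rw [hD, Dd_iter_add]
    have h1 := ih (fun n => f (n+1)) (Dd g) α (β+1) (goodF_shift hf) (goodF_D hg) n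
    have h2 := ih (Dd f) g (α+1) β (goodF_D hf) hg n
    have e1 : α + (β+1) + k = α + β + (k+1) := by omega
    have e2 : α + 1 + β + k = α + β + (k+1) := by omega
    rw [e1] at h1; rw [e2] at h2
    exact add_mem h1 h2

private lemma goodF_mul' (hFmul : ∀ i j : ℕ, ∀ a ∈ F i, ∀ b ∈ F j, a * b ∈ F (i + j))
    {f g : ℕ → A} {α β : ℕ} (hf : GoodF F f α) (hg : GoodF F g β) :
    GoodF F (fun n => f n * g n) (α + β) :=
  fun k n => goodF_mul hFmul k f g α β hf hg n

end

private def cseq {A : Type*} [Ring A] (a : ℕ → A) : ℕ → ℕ → A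
  | 0 => a
  | i+1 => fun n => (1 + a n) * cseq a i (n+1) - cseq a i n
private lemma descFactorial_cast_le {p : ℕ} [Fact p.Prime] :
    ∀ (i n : ℕ), i ≤ n →
      ((n.descFactorial i : ZMod p)) = ∏ t ∈ Finset.range i, ((n : ZMod p) - (t : ZMod p)) := by
  intro i
  induction i with
  | zero => simp
  | succ i ih =>
    intro n hin
    rw [Nat.descFactorial_succ, Finset.prod_range_succ, ← ih n (by omega)]
    push_cast [Nat.cast_sub (show i ≤ n by omega)]
    ring

private lemma descFactorial_cast {p : ℕ} [Fact p.Prime] (i n : ℕ) :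
    ((n.descFactorial i : ZMod p)) = ∏ t ∈ Finset.range i, ((n : ZMod p) - (t : ZMod p)) := by
  rcases le_or_gt i n with h | h
  · exact descFactorial_cast_le i n h
  · rw [Nat.descFactorial_eq_zero_iff_lt.2 h, Nat.cast_zero]
    exact (Finset.prod_eq_zero (Finset.mem_range.mpr h) (by rw [sub_self])).symm

private noncomputable def Qpoly (p : ℕ) (i : ℕ) : Polynomial (ZMod p) :=
  Polynomial.C ((i.factorial : ZMod p))⁻¹ *
    ∏ t ∈ Finset.range i, (Polynomial.X - Polynomial.C (t : ZMod p))

private lemma Qpoly_natDegree_le (p i : ℕ) [Fact p.Prime] : (Qpoly p i).natDegree ≤ i := by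
  refine (Polynomial.natDegree_C_mul_le _ _).trans ?_
  refine (Polynomial.natDegree_prod_le _ _).trans ?_
  have h1 : ∀ t ∈ Finset.range i,
      (Polynomial.X - Polynomial.C ((t : ZMod p))).natDegree ≤ 1 := by
    intro t _
    exact le_of_eq (Polynomial.natDegree_X_sub_C _)
  refine le_trans (Finset.sum_le_sum h1) ?_
  simp

private lemma Qpoly_eval {p : ℕ} [Fact p.Prime] (i n : ℕ) (hip : i < p) :
    (Qpoly p i).eval ((n : ZMod p)) = ((n.choose i : ZMod p)) := by
  have hfac : ((i.factorial : ZMod p)) ≠ 0 := by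
    rw [Ne, ZMod.natCast_eq_zero_iff]
    intro hdvd
    exact absurd ((Nat.Prime.dvd_factorial (Fact.out)).1 hdvd) (by omega)
  have heval : (Qpoly p i).eval ((n : ZMod p))
      = ((i.factorial : ZMod p))⁻¹ * ∏ t ∈ Finset.range i, ((n : ZMod p) - (t : ZMod p)) := by
    simp [Qpoly, Polynomial.eval_prod]
  rw [heval, ← descFactorial_cast, Nat.descFactorial_eq_factorial_mul_choose, Nat.cast_mul,
    ← mul_assoc, inv_mul_cancel₀ hfac, one_mul]

private lemma Qpoly_coeff_zero {p : ℕ} [Fact p.Prime] (i : ℕ) (hi : 1 ≤ i) :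
    (Qpoly p i).coeff 0 = 0 := by
  rw [Polynomial.coeff_zero_eq_eval_zero, Qpoly]
  rw [Polynomial.eval_mul, Polynomial.eval_prod]
  have : ∏ t ∈ Finset.range i, (Polynomial.X - Polynomial.C ((t : ZMod p))).eval 0 = 0 := by
    refine Finset.prod_eq_zero (Finset.mem_range.mpr (by omega : 0 < i)) ?_
    simp
  rw [this, mul_zero]

/-- **Propositions 3.2/3.4 (associative-algebra form).** Let `A` be an associative unital
`𝔽_p`-algebra with a decreasing filtration by two-sided ideals `A = A⁰ ⊇ A¹ ⊇ ⋯` with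
`A^i·A^j ⊆ A^{i+j}` and `A^p = 0`, and let `B` be a ring automorphism with
`(B − id)(A^i) ⊆ A^{i+1}`.  Then for every `j ≥ 1` and every `u ∈ 1 + A^j` there are unique
`d₁, …, d_{p−1}` with `d_i ∈ A^{i+j−1}` such that
`u·B(u)⋯B^{n−1}(u) = 1 + Σ_{1≤i≤p−1} d_i·n̄^i` for all `n ≥ 0`. -/
theorem stmt_8 (p : ℕ) [Fact p.Prime] (hp : 2 < p)
    (A : Type*) [Ring A] [Algebra (ZMod p) A]
    (F : ℕ → AddSubgroup A)
    (hF0 : F 0 = ⊤)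
    (hFanti : ∀ i j : ℕ, i ≤ j → F j ≤ F i)
    (hFmul : ∀ i j : ℕ, ∀ a ∈ F i, ∀ b ∈ F j, a * b ∈ F (i + j))
    (hFp : F p = ⊥)
    (B : RingAut A)
    (hB : ∀ i : ℕ, ∀ a ∈ F i, B a - a ∈ F (i + 1))
    (j : ℕ) (hj : 1 ≤ j) (u : A) (hu : u - 1 ∈ F j) :
    ∃ d : ℕ → A,
      (∀ i : ℕ, 1 ≤ i → i ≤ p - 1 → d i ∈ F (i + j - 1)) ∧
      (∀ n : ℕ,
        ((List.range n).map fun m => (B ^ m) u).prod =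
          1 + ∑ i ∈ Finset.Icc 1 (p - 1), ((n : ZMod p)) ^ i • d i) ∧
      (∀ d' : ℕ → A,
        (∀ i : ℕ, 1 ≤ i → i ≤ p - 1 → d' i ∈ F (i + j - 1)) →
        (∀ n : ℕ,
          ((List.range n).map fun m => (B ^ m) u).prod =
            1 + ∑ i ∈ Finset.Icc 1 (p - 1), ((n : ZMod p)) ^ i • d' i) →
        ∀ i : ℕ, 1 ≤ i → i ≤ p - 1 → d' i = d i) := by
  have hp1 : 1 ≤ p := by omega
  -- B preserves the filtration
  have hBF : ∀ i : ℕ, ∀ x ∈ F i, B x ∈ F i := by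
    intro i x hx
    have h1 := hB i x hx
    have h2 : B x = x + (B x - x) := by abel
    rw [h2]
    exact add_mem hx (hFanti i (i+1) (by omega) h1)
  have hBpow : ∀ (n : ℕ) (x : A), (B ^ (n+1)) x = (B ^ n) (B x) := by
    intro n x
    rw [pow_succ]
    rfl
  have hBnF : ∀ (m i : ℕ), ∀ x ∈ F i, (B ^ m) x ∈ F i := by
    intro m
    induction m with
    | zero => intro i x hx; simpa using hx
    | succ m ih =>
      intro i x hx
      rw [hBpow]
      exact ih i (B x) (hBF i x hx)
  set E : A → A := fun x => B x - x with hEdef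
  have hE : ∀ (k i : ℕ), ∀ x ∈ F i, E^[k] x ∈ F (i + k) := by
    intro k
    induction k with
    | zero => intro i x hx; simpa using hx
    | succ k ih =>
      intro i x hx
      rw [Function.iterate_succ_apply]
      have h1 : E x ∈ F (i + 1) := hB i x hx
      have h2 := ih (i+1) (E x) h1
      have h3 : i + 1 + k = i + (k+1) := by omega
      rw [h3] at h2
      exact h2
  set a : ℕ → A := fun n => (B ^ n) (u - 1) with ha
  have hDa : ∀ (k : ℕ) (x : A),
      Dd^[k] (fun n => (B ^ n) x) = fun n => (B ^ n) (E^[k] x) := by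
    intro k
    induction k with
    | zero => intro x; simp
    | succ k ih =>
      intro x
      rw [Dd_iter_succ]
      have h1 : Dd (fun n => (B ^ n) x) = fun n => (B ^ n) (E x) := by
        funext n
        show (B ^ (n+1)) x - (B ^ n) x = (B ^ n) (E x)
        rw [hBpow, ← map_sub]
      rw [h1, ih (E x)]
      funext n
      rw [Function.iterate_succ_apply]
  have good_a : GoodF F a j := by
    intro k n
    have h1 : Dd^[k] a = fun n => (B ^ n) (E^[k] (u - 1)) := hDa k (u - 1)
    rw [h1]
    exact hBnF n (j + k) _ (hE k j (u - 1) hu)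
  set Pf : ℕ → A := fun n => ((List.range n).map fun m => (B ^ m) u).prod with hPf
  have hPf0 : Pf 0 = 1 := by simp [hPf]
  have hPfsucc : ∀ n, Pf (n+1) = Pf n * (B ^ n) u := by
    intro n
    simp only [hPf, List.range_succ, List.map_append, List.prod_append, List.map_cons, List.map_nil,
      List.prod_cons, List.prod_nil, mul_one]
  have hBu : ∀ n, (B ^ n) u = 1 + a n := by
    intro n
    have h1 : a n = (B ^ n) u - 1 := by
      show (B ^ n) (u - 1) = _
      rw [map_sub, map_one]
    rw [h1]
    abel
  have hDP : ∀ (i n : ℕ), Dd^[i+1] Pf n = Pf n * cseq a i n := by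
    intro i
    induction i with
    | zero =>
      intro n
      show Pf (n+1) - Pf n = Pf n * a n
      rw [hPfsucc, hBu, mul_add, mul_one]
      abel
    | succ i ih =>
      intro n
      rw [Dd_iter_succ']
      show Dd^[i+1] Pf (n+1) - Dd^[i+1] Pf n = Pf n * cseq a (i+1) n
      rw [ih (n+1), ih n, hPfsucc, hBu]
      show Pf n * (1 + a n) * cseq a i (n+1) - Pf n * cseq a i n
        = Pf n * ((1 + a n) * cseq a i (n+1) - cseq a i n)
      rw [mul_sub, mul_assoc]
  have good_c : ∀ i, GoodF F (cseq a i) (j + i) := by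
    intro i
    induction i with
    | zero => exact good_a
    | succ i ih =>
      have hsplit : cseq a (i+1) = fun n => Dd (cseq a i) n + a n * cseq a i (n+1) := by
        funext n
        show (1 + a n) * cseq a i (n+1) - cseq a i n = _
        simp only [Dd]
        rw [add_mul, one_mul]
        abel
      rw [hsplit]
      refine goodF_add (goodF_D ih) ?_
      exact goodF_mono hFanti (goodF_mul' hFmul good_a (goodF_shift ih)) (by omega)
  set e : ℕ → A := fun i => Dd^[i] Pf 0 with he
  have he0 : e 0 = 1 := hPf0
  have heF : ∀ i, 1 ≤ i → e i ∈ F (j + i - 1) := by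
    intro i hi
    obtain ⟨i', rfl⟩ : ∃ i', i = i' + 1 := ⟨i - 1, by omega⟩
    have h1 : e (i'+1) = Pf 0 * cseq a i' 0 := hDP i' 0
    rw [h1, hPf0, one_mul]
    have h2 := good_c i' 0 0
    simp only [Function.iterate_zero, id_eq, Nat.add_zero] at h2
    have heq : j + (i'+1) - 1 = j + i' := by omega
    rw [heq]
    exact h2
  have heZ : ∀ i, p ≤ i → e i = 0 := by
    intro i hpi
    have h1 : e i ∈ F (j + i - 1) := heF i (by omega)
    have h2 := hFanti p (j + i - 1) (by omega) h1
    rw [hFp] at h2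
    simpa using h2
  have hrange : ∀ n, Pf n = ∑ i ∈ Finset.range p, ((n.choose i : ZMod p)) • e i := by
    intro n
    have h0 := newton n Pf
    have h1 : ∑ i ∈ Finset.range (n+1), n.choose i • e i
        = ∑ i ∈ Finset.range (max (n+1) p), n.choose i • e i := by
      refine Finset.sum_subset (Finset.range_subset_range.mpr (le_max_left _ _)) ?_
      intro i _ hi
      rw [Finset.mem_range, not_lt] at hi
      rw [Nat.choose_eq_zero_of_lt (by omega), zero_smul]
    have h2 : ∑ i ∈ Finset.range p, ((n.choose i : ZMod p)) • e i
        = ∑ i ∈ Finset.range (max (n+1) p), ((n.choose i : ZMod p)) • e i := by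
      refine Finset.sum_subset (Finset.range_subset_range.mpr (le_max_right _ _)) ?_
      intro i _ hi
      rw [Finset.mem_range, not_lt] at hi
      rw [heZ i (by omega), smul_zero]
    rw [h0, h1, h2]
    exact Finset.sum_congr rfl fun i _ => (Nat.cast_smul_eq_nsmul (ZMod p) _ _).symm
  have hsplitSum : ∀ (g : ℕ → A),
      ∑ i ∈ Finset.range p, g i = g 0 + ∑ i ∈ Finset.Icc 1 (p-1), g i := by
    intro g
    have hIcc : Finset.Icc 1 (p-1) = Finset.Ico 1 p := by
      rw [← Finset.Ico_add_one_right_eq_Icc]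
      congr 1
      omega
    rw [hIcc, Finset.range_eq_Ico,
      ← Finset.sum_Ico_consecutive g (by omega : (0:ℕ) ≤ 1) (by omega : 1 ≤ p)]
    congr 1
    rw [← Finset.range_eq_Ico, Finset.sum_range_one]
  set d : ℕ → A := fun k => ∑ i ∈ Finset.Icc 1 (p-1), (Qpoly p i).coeff k • e i with hd
  have hsmulF : ∀ (c : ZMod p) (m : ℕ) (x : A), x ∈ F m → c • x ∈ F m := by
    intro c m x hx
    rw [← ZMod.natCast_zmod_val c, Nat.cast_smul_eq_nsmul]
    exact AddSubgroup.nsmul_mem _ hx _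
  have hdF : ∀ k, 1 ≤ k → k ≤ p - 1 → d k ∈ F (k + j - 1) := by
    intro k hk1 hk2
    refine AddSubgroup.sum_mem _ ?_
    intro i hi
    rw [Finset.mem_Icc] at hi
    rcases le_or_gt k i with h | h
    · exact hsmulF _ _ _ (hFanti _ _ (by omega) (heF i (by omega)))
    · rw [Polynomial.coeff_eq_zero_of_natDegree_lt
        (lt_of_le_of_lt (Qpoly_natDegree_le p i) h), zero_smul]
      exact zero_mem _
  have hmain : ∀ n, Pf n = 1 + ∑ k ∈ Finset.Icc 1 (p-1), ((n : ZMod p)) ^ k • d k := by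
    intro n
    rw [hrange n, hsplitSum (fun i => ((n.choose i : ZMod p)) • e i)]
    have hfirst : ((n.choose 0 : ZMod p)) • e 0 = 1 := by
      simp [he0]
    rw [hfirst]
    congr 1
    have hev : ∀ i ∈ Finset.Icc 1 (p-1), ((n.choose i : ZMod p)) • e i
        = ∑ k ∈ Finset.range p, ((n : ZMod p)) ^ k • ((Qpoly p i).coeff k • e i) := by
      intro i hi
      rw [Finset.mem_Icc] at hi
      rw [← Qpoly_eval i n (by omega)]
      rw [Polynomial.eval_eq_sum_range'
        (lt_of_le_of_lt (Qpoly_natDegree_le p i) (by omega : i < p)) ((n : ZMod p))]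
      rw [Finset.sum_smul]
      refine Finset.sum_congr rfl fun k _ => ?_
      rw [mul_comm, mul_smul]
    rw [Finset.sum_congr rfl hev, Finset.sum_comm]
    have hinner : ∀ k, ∑ i ∈ Finset.Icc 1 (p-1), ((n : ZMod p)) ^ k • ((Qpoly p i).coeff k • e i)
        = ((n : ZMod p)) ^ k • d k := by
      intro k
      rw [← Finset.smul_sum]
    rw [Finset.sum_congr rfl (fun k _ => hinner k),
      hsplitSum (fun k => ((n : ZMod p)) ^ k • d k)]
    have hd0 : ((n : ZMod p)) ^ 0 • d 0 = 0 := by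
      simp only [pow_zero, one_smul, hd]
      refine Finset.sum_eq_zero fun i hi => ?_
      rw [Finset.mem_Icc] at hi
      rw [Qpoly_coeff_zero i hi.1, zero_smul]
    rw [hd0, zero_add]
  refine ⟨d, fun i hi1 hi2 => hdF i hi1 hi2, fun n => hmain n, ?_⟩
  -- uniqueness
  intro d' hd'F hd'eq k hk1 hk2
  have hzero : ∀ x : ZMod p,
      ∑ i ∈ Finset.Icc 1 (p-1), x ^ i • (d' i - d i) = 0 := by
    intro x
    have h1 := hmain x.val
    have h2 : Pf x.val = 1 + ∑ i ∈ Finset.Icc 1 (p-1), ((x.val : ZMod p)) ^ i • d' i :=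
      hd'eq x.val
    have h3 := add_left_cancel (h1.symm.trans h2)
    rw [ZMod.natCast_zmod_val] at h3
    calc ∑ i ∈ Finset.Icc 1 (p-1), x ^ i • (d' i - d i)
        = ∑ i ∈ Finset.Icc 1 (p-1), (x ^ i • d' i - x ^ i • d i) := by
          refine Finset.sum_congr rfl fun i _ => ?_
          rw [smul_sub]
      _ = ∑ i ∈ Finset.Icc 1 (p-1), x ^ i • d' i
            - ∑ i ∈ Finset.Icc 1 (p-1), x ^ i • d i := Finset.sum_sub_distrib _ _
      _ = 0 := by rw [h3, sub_self]
  set δ : ℕ → A := fun i => d' i - d i with hδ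
  have hS : ∑ i ∈ Finset.Icc 1 (p-1),
      (∑ x : (ZMod p)ˣ, ((x : ZMod p)) ^ (p-1-k+i)) • δ i = 0 := by
    have h4 : ∑ x : (ZMod p)ˣ,
        ((x : ZMod p)) ^ (p-1-k) • (∑ i ∈ Finset.Icc 1 (p-1), ((x : ZMod p)) ^ i • δ i)
        = 0 := by
      refine Finset.sum_eq_zero fun x _ => ?_
      rw [hzero ((x : ZMod p)), smul_zero]
    calc ∑ i ∈ Finset.Icc 1 (p-1), (∑ x : (ZMod p)ˣ, ((x : ZMod p)) ^ (p-1-k+i)) • δ i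
        = ∑ i ∈ Finset.Icc 1 (p-1), ∑ x : (ZMod p)ˣ, ((x : ZMod p)) ^ (p-1-k+i) • δ i := by
          refine Finset.sum_congr rfl fun i _ => ?_
          rw [Finset.sum_smul]
      _ = ∑ x : (ZMod p)ˣ, ∑ i ∈ Finset.Icc 1 (p-1), ((x : ZMod p)) ^ (p-1-k+i) • δ i :=
          Finset.sum_comm
      _ = ∑ x : (ZMod p)ˣ,
            ((x : ZMod p)) ^ (p-1-k) • (∑ i ∈ Finset.Icc 1 (p-1), ((x : ZMod p)) ^ i • δ i) := by
          refine Finset.sum_congr rfl fun x _ => ?_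
          rw [Finset.smul_sum]
          refine Finset.sum_congr rfl fun i _ => ?_
          rw [smul_smul, ← pow_add]
      _ = 0 := h4
  have hcard : Fintype.card (ZMod p) = p := ZMod.card p
  have hcoef : ∀ i ∈ Finset.Icc 1 (p-1),
      (∑ x : (ZMod p)ˣ, ((x : ZMod p)) ^ (p-1-k+i))
        = if i = k then (-1 : ZMod p) else 0 := by
    intro i hi
    rw [Finset.mem_Icc] at hi
    have h5 : ∀ x : (ZMod p)ˣ, ((x : ZMod p)) ^ (p-1-k+i) = (↑(x ^ (p-1-k+i)) : ZMod p) := by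
      intro x
      rw [Units.val_pow_eq_pow_val]
    simp only [h5]
    rw [show (∑ x : (ZMod p)ˣ, (↑(x ^ (p-1-k+i)) : ZMod p))
        = if Fintype.card (ZMod p) - 1 ∣ (p-1-k+i) then (-1 : ZMod p) else 0 from
      FiniteField.sum_pow_units (ZMod p) (p-1-k+i)]
    rw [hcard]
    by_cases hik : i = k
    · rw [if_pos hik]
      rw [if_pos (by subst hik; exact ⟨1, by omega⟩)]
    · rw [if_neg hik]
      rw [if_neg ?_]
      rintro ⟨c, hc⟩
      match c with
      | 0 => omega
      | 1 => omega
      | (c+2) =>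
        have h6 : (p-1) * 2 ≤ (p-1) * (c+2) := Nat.mul_le_mul_left _ (by omega)
        omega
  have hS2 : ∑ i ∈ Finset.Icc 1 (p-1), (if i = k then (-1 : ZMod p) else 0) • δ i = 0 := by
    rw [← hS]
    exact Finset.sum_congr rfl fun i hi => by rw [hcoef i hi]
  rw [Finset.sum_eq_single_of_mem k (Finset.mem_Icc.mpr ⟨hk1, hk2⟩)
    (fun i _ hik => by rw [if_neg hik, zero_smul])] at hS2
  rw [if_pos rfl, neg_smul, one_smul, neg_eq_zero] at hS2
  have : d' k - d k = 0 := hS2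
  exact sub_eq_zero.mp this
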